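/- Let G be a topological group acting continuously on a topological space X. If X is G-contractible, i.e. there exists a point x₀ ∈ X and a G-homotopy from the identity map of X to a continuous G-equivariant map whose image is contained in the orbit G·x₀, then the effective topological complexity satisfies TC^{G,∞}(X) = 1; that is, for some k ≥ 1 there is a (G,k)-motion planner defined on all of X × X. -/

import Mathlib

open Set

/-- The space of `k`-tuples of paths in `X` that are consecutive up to the `G`-action:
the `(i+1)`-st path starts in the `G`-orbit of the endpoint of the `i`-th path. -/
def effPk (G X : Type*) [Group G] [TopologicalSpace X] [MulAction G X] (k : ℕ) :
    Set (Fin k → C(unitInterval, X)) :=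
  {γ | ∀ (i : ℕ) (h : i + 1 < k),
    γ ⟨i + 1, h⟩ 0 ∈ MulAction.orbit G (γ ⟨i, Nat.lt_of_succ_lt h⟩ 1)}

/-- A `(G,k)`-motion planner on `U ⊆ X × X`: a continuous section over `U` of the map
`π_k` sending a `k`-tuple of consecutive-up-to-`G` paths to its (start, end) pair. -/
def IsEffPlanner (G X : Type*) [Group G] [TopologicalSpace X] [MulAction G X]
    (k : ℕ) (hk : 0 < k) (U : Set (X × X)) : Prop :=
  ∃ s : U → (Fin k → C(unitInterval, X)),
    Continuous s ∧ (∀ u, s u ∈ effPk G X k) ∧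
    ∀ u : U, (s u ⟨0, hk⟩) 0 = (u : X × X).1 ∧
      (s u ⟨k - 1, Nat.sub_lt hk Nat.one_pos⟩) 1 = (u : X × X).2

/-- `TC^{G,k}(X)`: the least `ℓ ≥ 1` such that `X × X` admits an open cover by `ℓ` sets,
each admitting a `(G,k)`-motion planner; `∞` if there is no such `ℓ`. -/
noncomputable def effTC (G X : Type*) [Group G] [TopologicalSpace X] [MulAction G X]
    (k : ℕ) (hk : 0 < k) : ℕ∞ :=
  sInf {ℓ : ℕ∞ | ∃ n : ℕ, ℓ = n ∧ 1 ≤ n ∧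
    ∃ U : Fin n → Set (X × X), (∀ i, IsOpen (U i)) ∧ (⋃ i, U i) = Set.univ ∧
      ∀ i, IsEffPlanner G X k hk (U i)}

/-- Effective topological complexity `TC^{G,∞}(X)`: the minimum of `TC^{G,k}(X)` over `k ≥ 1`. -/
noncomputable def effTCinf (G X : Type*) [Group G] [TopologicalSpace X] [MulAction G X] : ℕ∞ :=
  ⨅ k : ℕ, effTC G X (k + 1) k.succ_pos

/-- Farber's (non-reduced) topological complexity `TC(X)`. -/
noncomputable def farberTC (X : Type*) [TopologicalSpace X] : ℕ∞ :=
  sInf {ℓ : ℕ∞ | ∃ n : ℕ, ℓ = n ∧ 1 ≤ n ∧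
    ∃ U : Fin n → Set (X × X), (∀ i, IsOpen (U i)) ∧ (⋃ i, U i) = Set.univ ∧
      ∀ i, ∃ s : (U i) → C(unitInterval, X), Continuous s ∧
        ∀ u : (U i), (s u) 0 = (u : X × X).1 ∧ (s u) 1 = (u : X × X).2}

/-- If `X` is `G`-contractible — i.e. there are a point `x₀ ∈ X`, a continuous
`G`-equivariant map `c : X → X` with values in the orbit `G • x₀`, and a `G`-homotopy from the
identity of `X` to `c` — then `TC^{G,∞}(X) = 1`; in particular for some `k ≥ 1` there is a
`(G,k)`-motion planner defined on all of `X × X`. -/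
theorem effTCinf_of_G_contractible {G : Type*} [Group G] [TopologicalSpace G]
    [IsTopologicalGroup G] {X : Type*} [TopologicalSpace X] [MulAction G X] [ContinuousSMul G X]
    (x₀ : X) (c : C(X, X))
    (hc : ∀ (a : G) (x : X), c (a • x) = a • c x)
    (hrange : ∀ x : X, c x ∈ MulAction.orbit G x₀)
    (F : ContinuousMap.Homotopy (ContinuousMap.id X) c)
    (hF : ∀ (a : G) (x : X) (t : unitInterval), F (t, a • x) = a • F (t, x)) :
    effTCinf G X = 1 ∧
    ∃ (k : ℕ) (hk : 0 < k), IsEffPlanner G X k hk Set.univ := by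
  classical
  -- forward contraction paths and their reverses
  let Φ : C(X, C(unitInterval, X)) :=
    (F.toContinuousMap.comp ContinuousMap.prodSwap).curry
  let Φ' : C(X, C(unitInterval, X)) :=
    (F.toContinuousMap.comp
      ⟨fun p : X × unitInterval => (unitInterval.symm p.2, p.1), by fun_prop⟩).curry
  have planner : IsEffPlanner G X 2 (by norm_num) Set.univ := by
    refine ⟨fun u i => if (i : ℕ) = 0 then Φ (u : X × X).1 else Φ' (u : X × X).2, ?_, ?_, ?_⟩
    · apply continuous_pi
      intro i
      by_cases h : (i : ℕ) = 0
      · simp only [h, if_pos]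
        exact Φ.continuous.comp (continuous_fst.comp continuous_subtype_val)
      · simp only [h, if_neg, if_false]
        exact Φ'.continuous.comp (continuous_snd.comp continuous_subtype_val)
    · intro u
      intro i hi
      have hi0 : i = 0 := by omega
      subst hi0
      simp only [Fin.mk_one, Fin.mk_zero, Fin.val_one, Fin.val_zero, if_pos, if_neg,
        one_ne_zero, if_false, if_true]
      rw [if_neg (by omega : ¬(0 + 1 = 0))]
      have h1 : Φ' (u : X × X).2 0 = c ((u : X × X).2) := by
        simp only [Φ', ContinuousMap.curry_apply, ContinuousMap.comp_apply,
          ContinuousMap.coe_mk, unitInterval.symm_zero]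
        exact F.apply_one _
      have h2 : Φ (u : X × X).1 1 = c ((u : X × X).1) := by
        simp only [Φ, ContinuousMap.curry_apply, ContinuousMap.comp_apply,
          ContinuousMap.prodSwap_apply]
        exact F.apply_one _
      rw [h1, h2]
      obtain ⟨a, ha⟩ := hrange (u : X × X).1
      obtain ⟨b, hb⟩ := hrange (u : X × X).2
      exact ⟨b * a⁻¹, by simp only [← ha, mul_smul, inv_smul_smul]; exact hb⟩
    · intro u
      constructor
      · simp only [Fin.val_zero, if_pos]
        simp only [Φ, ContinuousMap.curry_apply, ContinuousMap.comp_apply,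
          ContinuousMap.prodSwap_apply]
        simpa using F.apply_zero ((u : X × X).1)
      · simp only [show (2 - 1 : ℕ) = 1 from rfl, Fin.val_one, one_ne_zero, if_false]
        simp only [Φ', ContinuousMap.curry_apply, ContinuousMap.comp_apply,
          ContinuousMap.coe_mk, unitInterval.symm_one]
        simpa using F.apply_zero ((u : X × X).2)
  have hmem : (1 : ℕ∞) ∈ {ℓ : ℕ∞ | ∃ n : ℕ, ℓ = n ∧ 1 ≤ n ∧
      ∃ U : Fin n → Set (X × X), (∀ i, IsOpen (U i)) ∧ (⋃ i, U i) = Set.univ ∧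
        ∀ i, IsEffPlanner G X 2 (Nat.succ_pos 1) (U i)} := by
    refine ⟨1, by norm_num, le_refl 1, fun _ => Set.univ, fun _ => isOpen_univ, by exact Set.iUnion_const _, fun _ => planner⟩
  have hub : effTCinf G X ≤ 1 := by
    refine le_trans (iInf_le _ 1) ?_
    exact sInf_le hmem
  have hlb : (1 : ℕ∞) ≤ effTCinf G X := by
    refine le_iInf fun k => le_sInf fun ℓ hℓ => ?_
    obtain ⟨n, rfl, hn, -⟩ := hℓ
    exact_mod_cast hn
  exact ⟨le_antisymm hub hlb, 2, by norm_num, planner⟩
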